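/- Let E be a finite-dimensional real inner product space, d ≥ 1 an integer, g : E → ℝ convex and continuously differentiable, h : E → ℝ convex, λ > 0, x ∈ E and 0 ≤ σ̂ ≤ 1. Suppose ȳ ∈ E and w ∈ E satisfy w − ∇g(ȳ) ∈ ∂h(ȳ) and λw + ȳ − x = 0 (i.e., ȳ is the exact proximal point of g + h at x with stepsize λ). If (y, u, ε) ∈ E × E × [0,∞) satisfies u − ∇g(y) ∈ ∂_ε h(y) and ‖λu + y − x‖² + 2λε ≤ σ̂²‖y − x‖², then λ·(1 − σ̂)^{d−1}·‖y − x‖^{d−1} ≤ λ·‖ȳ − x‖^{d−1} ≤ λ·(1 + σ̂)^{d−1}·‖y − x‖^{d−1}. -/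

import Mathlib

open scoped RealInnerProductSpace BigOperators

/-- The subdifferential of a convex function `h` at `z`. -/
def subdiff {E : Type*} [NormedAddCommGroup E] [InnerProductSpace ℝ E]
    (h : E → ℝ) (z : E) : Set E :=
  {v | ∀ y : E, h z + ⟪v, y - z⟫ ≤ h y}

/-- The ε-subdifferential of a convex function `h` at `z`. -/
def epsSubdiff {E : Type*} [NormedAddCommGroup E] [InnerProductSpace ℝ E]
    (h : E → ℝ) (ε : ℝ) (z : E) : Set E :=
  {v | ∀ y : E, h z + ⟪v, y - z⟫ - ε ≤ h y}

/-- Gradient inequality for convex differentiable functions. -/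
lemma grad_ineq {E : Type*} [NormedAddCommGroup E] [InnerProductSpace ℝ E]
    [CompleteSpace E] (g : E → ℝ) (hgconv : ConvexOn ℝ Set.univ g) (hg : Differentiable ℝ g)
    (z p : E) : g z + ⟪gradient g z, p - z⟫ ≤ g p := by
  set φ : ℝ → ℝ := fun t => g (z + t • (p - z)) with hφ
  have hline : ∀ t : ℝ, HasDerivAt (fun s : ℝ => z + s • (p - z)) (p - z) t := by
    intro t
    simpa using ((hasDerivAt_id t).smul_const (p - z)).const_add z
  have hgrad : HasGradientAt g (gradient g z) z := (hg z).hasGradientAt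
  have hfd : HasFDerivAt g ((InnerProductSpace.toDual ℝ E) (gradient g z)) z :=
    hasGradientAt_iff_hasFDerivAt.mp hgrad
  have hderiv : HasDerivAt φ ⟪gradient g z, p - z⟫ 0 := by
    have h0 : z + (0 : ℝ) • (p - z) = z := by simp
    have := (h0 ▸ hfd).comp_hasDerivAt 0 (hline 0)
    simpa [φ, Function.comp_def, InnerProductSpace.toDual_apply_apply] using this
  have hconvφ : ConvexOn ℝ Set.univ φ := by
    have haff : ConvexOn ℝ ((fun t : ℝ => z + t • (p - z)) ⁻¹' Set.univ)
        (g ∘ (AffineMap.lineMap z p : ℝ →ᵃ[ℝ] E)) := by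
      simpa using hgconv.comp_affineMap (AffineMap.lineMap z p)
    have : ConvexOn ℝ Set.univ (g ∘ (AffineMap.lineMap z p : ℝ →ᵃ[ℝ] E)) := by
      simpa using haff
    convert this using 1
    funext t
    simp [φ, AffineMap.lineMap_apply, add_comm]
  have hslope : ⟪gradient g z, p - z⟫ ≤ slope φ 0 1 :=
    hconvφ.le_slope_of_hasDerivAt (Set.mem_univ 0) (Set.mem_univ 1) one_pos hderiv
  have : slope φ 0 1 = g p - g z := by
    simp [slope_def_field, φ]
  linarith [hslope.trans_eq this]

theorem stmt6 {E : Type*} [NormedAddCommGroup E] [InnerProductSpace ℝ E]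
    [FiniteDimensional ℝ E]
    (d : ℕ) (hd : 1 ≤ d)
    (g : E → ℝ) (hgconv : ConvexOn ℝ Set.univ g) (hg : ContDiff ℝ 1 g)
    (h : E → ℝ) (hh : ConvexOn ℝ Set.univ h)
    (lam : ℝ) (hlam : 0 < lam) (x : E) (σh : ℝ) (hσh0 : 0 ≤ σh) (hσh1 : σh ≤ 1)
    (ybar w : E)
    (hw : w - gradient g ybar ∈ subdiff h ybar)
    (heq : lam • w + ybar - x = 0)
    (y u : E) (ε : ℝ) (hε : 0 ≤ ε)
    (hu : u - gradient g y ∈ epsSubdiff h ε y)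
    (hineq : ‖lam • u + y - x‖ ^ 2 + 2 * lam * ε ≤ σh ^ 2 * ‖y - x‖ ^ 2) :
    lam * (1 - σh) ^ (d - 1) * ‖y - x‖ ^ (d - 1) ≤ lam * ‖ybar - x‖ ^ (d - 1) ∧
      lam * ‖ybar - x‖ ^ (d - 1) ≤ lam * (1 + σh) ^ (d - 1) * ‖y - x‖ ^ (d - 1) := by
  have hgd : Differentiable ℝ g := hg.differentiable one_ne_zero
  -- monotonicity-type inequality
  have h1 := hw y
  have h2 := hu ybar
  have h3 := grad_ineq g hgconv hgd ybar y
  have h4 := grad_ineq g hgconv hgd y ybar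
  have hmono : ⟪w - u, y - ybar⟫ ≤ ε := by
    have e1 : ⟪w - gradient g ybar, y - ybar⟫ =
        ⟪w, y - ybar⟫ - ⟪gradient g ybar, y - ybar⟫ := by
      rw [inner_sub_left]
    have e2 : ⟪u - gradient g y, ybar - y⟫ =
        ⟪u, ybar - y⟫ - ⟪gradient g y, ybar - y⟫ := by
      rw [inner_sub_left]
    have e3 : ⟪u, ybar - y⟫ = - ⟪u, y - ybar⟫ := by
      rw [← inner_neg_right]; congr 1; abel
    have e4 : ⟪w - u, y - ybar⟫ = ⟪w, y - ybar⟫ - ⟪u, y - ybar⟫ := by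
      rw [inner_sub_left]
    change h ybar + ⟪w - gradient g ybar, y - ybar⟫ ≤ h y at h1
    change h y + ⟪u - gradient g y, ybar - y⟫ - ε ≤ h ybar at h2
    linarith [h1, h2, h3, h4]
  -- express w
  set r : E := lam • u + y - x with hr
  have hw' : lam • w = x - ybar := by
    have : lam • w = -(ybar - x) := by
      have := heq; linear_combination (norm := module) this
    rw [this]; abel
  -- key quadratic bound: ‖y - ybar‖² ≤ ⟪r, y - ybar⟫ + lam * ε
  have hquad : ‖y - ybar‖ ^ 2 ≤ ⟪r, y - ybar⟫ + lam * ε := by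
    have hlm : lam * ⟪w - u, y - ybar⟫ ≤ lam * ε :=
      mul_le_mul_of_nonneg_left hmono hlam.le
    have expand : lam * ⟪w - u, y - ybar⟫ =
        ⟪lam • w - lam • u, y - ybar⟫ := by
      rw [← smul_sub, real_inner_smul_left]
    have expand2 : lam • w - lam • u = (y - ybar) - r := by
      rw [hw', hr]; abel
    have : ⟪(y - ybar) - r, y - ybar⟫ = ‖y - ybar‖ ^ 2 - ⟪r, y - ybar⟫ := by
      rw [inner_sub_left, real_inner_self_eq_norm_sq]
    rw [expand, expand2, this] at hlm
    linarith
  -- bound t = ‖y - ybar‖ by σh * ‖y - x‖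
  have ht : ‖y - ybar‖ ≤ σh * ‖y - x‖ := by
    set t := ‖y - ybar‖ with htdef
    set a := ‖r‖ with hadef
    have hcs : ⟪r, y - ybar⟫ ≤ a * t := real_inner_le_norm r (y - ybar)
    have ht0 : 0 ≤ t := norm_nonneg _
    have ha0 : 0 ≤ a := norm_nonneg _
    have hb0 : 0 ≤ lam * ε := mul_nonneg hlam.le hε
    have hsq : t ^ 2 ≤ a ^ 2 + 2 * (lam * ε) := by nlinarith [sq_nonneg (t - a)]
    have hσy : 0 ≤ σh * ‖y - x‖ := mul_nonneg hσh0 (norm_nonneg _)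
    have hfin : t ^ 2 ≤ (σh * ‖y - x‖) ^ 2 := by
      have : a ^ 2 + 2 * (lam * ε) ≤ σh ^ 2 * ‖y - x‖ ^ 2 := by
        linarith [hineq]
      linarith
    exact (pow_le_pow_iff_left₀ ht0 hσy two_ne_zero).mp hfin
  have hnorm1 : (1 - σh) * ‖y - x‖ ≤ ‖ybar - x‖ := by
    have tri' : ‖y - x‖ ≤ ‖y - ybar‖ + ‖ybar - x‖ := by
      have := norm_add_le (y - ybar) (ybar - x)
      simpa [sub_add_sub_cancel] using this
    linarith
  have hnorm2 : ‖ybar - x‖ ≤ (1 + σh) * ‖y - x‖ := by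
    have tri : ‖ybar - x‖ ≤ ‖ybar - y‖ + ‖y - x‖ := by
      have := norm_add_le (ybar - y) (y - x)
      simpa [sub_add_sub_cancel] using this
    have : ‖ybar - y‖ = ‖y - ybar‖ := by rw [norm_sub_rev]
    linarith
  constructor
  · have h1σ : 0 ≤ (1 - σh) * ‖y - x‖ := mul_nonneg (by linarith) (norm_nonneg _)
    have := pow_le_pow_left₀ h1σ hnorm1 (d - 1)
    rw [mul_pow] at this
    have := mul_le_mul_of_nonneg_left this hlam.le
    linarith [this]
  · have := pow_le_pow_left₀ (norm_nonneg (ybar - x)) hnorm2 (d - 1)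
    rw [mul_pow] at this
    have := mul_le_mul_of_nonneg_left this hlam.le
    linarith [this]
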